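/- In a group G generated by four involutions r0, r0', r1, r1' with r0 * r0' * r1 * r1' = 1, one has r0 * r1 = (r0 * r0') * (r0 * r1'), and more generally (r0 * r1)^n = (r0 * r0')^n * (r0 * r1')^n for every integer n. -/
import Mathlib

theorem stmt6 {G : Type*} [Group G] (r₀ r₀' r₁ r₁' : G)
    (h0 : r₀ * r₀ = 1) (h0' : r₀' * r₀' = 1)
    (h1 : r₁ * r₁ = 1) (h1' : r₁' * r₁' = 1)
    (hrel : r₀ * r₀' * r₁ * r₁' = 1) :
    r₀ * r₁ = (r₀ * r₀') * (r₀ * r₁') ∧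
    ∀ n : ℤ, (r₀ * r₁) ^ n = (r₀ * r₀') ^ n * (r₀ * r₁') ^ n := by
  have h0a : ∀ x : G, r₀ * (r₀ * x) = x := fun x => by rw [← mul_assoc, h0, one_mul]
  have h0'a : ∀ x : G, r₀' * (r₀' * x) = x := fun x => by rw [← mul_assoc, h0', one_mul]
  have h1a : ∀ x : G, r₁ * (r₁ * x) = x := fun x => by rw [← mul_assoc, h1, one_mul]
  have hA : r₀ * r₀' * r₁ = r₁' := by
    have := congrArg (· * r₁') hrel
    simpa [mul_assoc, h1'] using this
  have i0 : r₀⁻¹ = r₀ := inv_eq_of_mul_eq_one_right h0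
  have i0' : r₀'⁻¹ = r₀' := inv_eq_of_mul_eq_one_right h0'
  have i1 : r₁⁻¹ = r₁ := inv_eq_of_mul_eq_one_right h1
  have i1' : r₁'⁻¹ = r₁' := inv_eq_of_mul_eq_one_right h1'
  have hB : r₁' = r₁ * r₀' * r₀ := by
    have := congrArg (·⁻¹) hA
    simpa [mul_inv_rev, i0, i0', i1, i1', mul_assoc] using this.symm
  have key : r₀ * r₁ = (r₀ * r₀') * (r₀ * r₁') := by
    rw [← hA]; simp [mul_assoc, h0a, h0'a, h0']
  have hc : Commute (r₀ * r₀') (r₀ * r₁') := by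
    unfold Commute SemiconjBy
    rw [← key, hB]
    simp [mul_assoc, h0a, h0'a, h1a, h0, h0']
  exact ⟨key, fun n => by rw [key, hc.mul_zpow]⟩
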